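/- For every SPGM S and every subtree τ ∈ T(S), the underlying directed graph of τ is a rooted tree: it is connected, contains no cycles (even as an undirected graph), and every kept node other than the root has exactly one parent within τ. -/

import Mathlib

attribute [local instance] Classical.propDecidable

noncomputable section

/-- Indicator variable `[v]_k` relative to a partial assignment `y`
(`y v = none` means `v` is unobserved). -/
def Indicator {Var : Type} (y : Var → Option ℕ) (v : Var) (k : ℕ) : ℝ :=
  match y v with
  | none => 1
  | some i => if i = k then 1 else 0

/-- Kinds of nodes of a sum-product graphical model: variable nodes (Vnodes),
product nodes, observed sum nodes and unobserved sum nodes. -/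
inductive SPGMKind (Xvar Zvar : Type) : Type where
  | vnode (x : Xvar)
  | prod
  | sumObs (z : Zvar)
  | sumUnobs

/-- A sum-product graphical model (SPGM) over variables `Xvar` (with domain sizes `Xdom`)
and context variables `Zvar` (with domain sizes `Zdom`).  The underlying directed graph
is given by `children`; acyclicity is encoded by the strictly decreasing `rank`.
`Q`/`W` are the edge weights of observed/unobserved sum nodes (`Q t k` is the weight of the
`k`-th child edge of `t`), `Pcond t s k j` is the conditional table `P_{s,t}(k | j)` used when
`s` is a Vparent of the Vnode `t`, and `Punary t k` is the unary table `P_t(k)` used when the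
Vnode `t` has no Vparent. -/
structure SPGM (Xvar Zvar : Type) (Xdom : Xvar → ℕ) (Zdom : Zvar → ℕ) where
  V : Type
  fintypeV : Fintype V
  decEqV : DecidableEq V
  root : V
  kind : V → SPGMKind Xvar Zvar
  children : V → List V
  rank : V → ℕ
  rank_lt : ∀ t c, c ∈ children t → rank c < rank t
  Q : V → ℕ → ℝ
  W : V → ℕ → ℝ
  Pcond : V → V → ℕ → ℕ → ℝ
  Punary : V → ℕ → ℝ

attribute [instance] SPGM.fintypeV SPGM.decEqV

namespace SPGM

variable {Xvar Zvar : Type} {Xdom : Xvar → ℕ} {Zdom : Zvar → ℕ}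

def isVnode (S : SPGM Xvar Zvar Xdom Zdom) (t : S.V) : Prop :=
  ∃ x, S.kind t = SPGMKind.vnode x

def isProd (S : SPGM Xvar Zvar Xdom Zdom) (t : S.V) : Prop :=
  S.kind t = SPGMKind.prod

def isSumObs (S : SPGM Xvar Zvar Xdom Zdom) (t : S.V) : Prop :=
  ∃ z, S.kind t = SPGMKind.sumObs z

def isSumUnobs (S : SPGM Xvar Zvar Xdom Zdom) (t : S.V) : Prop :=
  S.kind t = SPGMKind.sumUnobs

def isSum (S : SPGM Xvar Zvar Xdom Zdom) (t : S.V) : Prop :=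
  S.isSumObs t ∨ S.isSumUnobs t

/-- The variable labeling a node, if any. -/
def label (S : SPGM Xvar Zvar Xdom Zdom) (t : S.V) : Option (Xvar ⊕ Zvar) :=
  match S.kind t with
  | SPGMKind.vnode x => some (Sum.inl x)
  | SPGMKind.sumObs z => some (Sum.inr z)
  | _ => none

/-- Domain size of the variable of a Vnode (`0` for non-Vnodes). -/
def domOf (S : SPGM Xvar Zvar Xdom Zdom) (t : S.V) : ℕ :=
  match S.kind t with
  | SPGMKind.vnode x => Xdom x
  | _ => 0

/-- Reachability along directed edges. -/
def Reach (S : SPGM Xvar Zvar Xdom Zdom) : S.V → S.V → Prop :=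
  Relation.ReflTransGen fun a b => b ∈ S.children a

/-- The scope of a node: all variables labeling nodes of the sub-DAG rooted at it. -/
def scope (S : SPGM Xvar Zvar Xdom Zdom) (t : S.V) : Set (Xvar ⊕ Zvar) :=
  {v | ∃ u, S.Reach t u ∧ S.label u = some v}

/-- There is a (nonempty) directed path from `s` to `t` containing no intermediate Vnode. -/
inductive ReachNoV (S : SPGM Xvar Zvar Xdom Zdom) : S.V → S.V → Prop where
  | base {s c : S.V} : c ∈ S.children s → ReachNoV S s c
  | step {s t c : S.V} : ReachNoV S s t → ¬ S.isVnode t → c ∈ S.children t → ReachNoV S s c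

/-- `s` is a Vparent of `t`. -/
def vparent (S : SPGM Xvar Zvar Xdom Zdom) (s t : S.V) : Prop :=
  S.isVnode s ∧ S.ReachNoV s t

/-- Validity of an SPGM: structural conditions and nonnegativity of all parameters. -/
structure Valid (S : SPGM Xvar Zvar Xdom Zdom) : Prop where
  xdom_pos : ∀ x : Xvar, 0 < Xdom x
  zdom_pos : ∀ z : Zvar, 0 < Zdom z
  reach_root : ∀ v : S.V, S.Reach S.root v
  vnode_child : ∀ t : S.V, S.isVnode t → (S.children t).length ≤ 1
  vnode_scope : ∀ (t : S.V) (x : Xvar) (c : S.V), S.kind t = SPGMKind.vnode x →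
    c ∈ S.children t → Sum.inl x ∉ S.scope c
  sum_child : ∀ t : S.V, S.isSum t → S.children t ≠ []
  sumObs_card : ∀ (t : S.V) (z : Zvar), S.kind t = SPGMKind.sumObs z →
    (S.children t).length = Zdom z
  sum_scope : ∀ t : S.V, S.isSum t →
    ∀ c ∈ S.children t, ∀ c' ∈ S.children t, S.scope c = S.scope c'
  sumObs_scope : ∀ (t : S.V) (z : Zvar) (c : S.V), S.kind t = SPGMKind.sumObs z →
    c ∈ S.children t → Sum.inr z ∉ S.scope c
  prod_child : ∀ t : S.V, S.isProd t → S.children t ≠ []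
  prod_scope : ∀ t : S.V, S.isProd t →
    (S.children t).Pairwise fun c c' => Disjoint (S.scope c) (S.scope c')
  Q_nonneg : ∀ (t : S.V) (k : ℕ), 0 ≤ S.Q t k
  W_nonneg : ∀ (t : S.V) (k : ℕ), 0 ≤ S.W t k
  Pcond_nonneg : ∀ (t s : S.V) (k j : ℕ), 0 ≤ S.Pcond t s k j
  Punary_nonneg : ∀ (t : S.V) (k : ℕ), 0 ≤ S.Punary t k

/-- The conditional/unary tables of the SPGM are normalized probability tables. -/
structure Normalized (S : SPGM Xvar Zvar Xdom Zdom) : Prop where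
  Pcond_sum : ∀ t s : S.V, S.isVnode t → S.vparent s t → ∀ j < S.domOf s,
    ∑ k ∈ Finset.range (S.domOf t), S.Pcond t s k j = 1
  Punary_sum : ∀ t : S.V, S.isVnode t → (¬ ∃ s, S.vparent s t) →
    ∑ k ∈ Finset.range (S.domOf t), S.Punary t k = 1

/-- Message passing, with explicit fuel (the fuel never runs out thanks to `rank_lt`):
`msgAux S y n t s j` is the message `μ_{t→s;j}` (`s = none` denotes the fictitious root). -/
def msgAux (S : SPGM Xvar Zvar Xdom Zdom) (y : (Xvar ⊕ Zvar) → Option ℕ) :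
    ℕ → S.V → Option S.V → ℕ → ℝ
  | 0, _, _, _ => 1
  | n + 1, t, s, j =>
    match S.kind t with
    | SPGMKind.vnode x =>
        ∑ k ∈ Finset.range (Xdom x),
          (match s with
            | some s' => S.Pcond t s' k j
            | none => S.Punary t k) *
            Indicator y (Sum.inl x) k *
            (match S.children t with
              | [] => (1 : ℝ)
              | c :: _ => msgAux S y n c (some t) k)
    | SPGMKind.prod => ((S.children t).map fun c => msgAux S y n c s j).prod
    | SPGMKind.sumObs z =>
        ∑ k ∈ Finset.range (S.children t).length,
          Indicator y (Sum.inr z) k * S.Q t k * msgAux S y n ((S.children t).getD k t) s j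
    | SPGMKind.sumUnobs =>
        ∑ k ∈ Finset.range (S.children t).length,
          S.W t k * msgAux S y n ((S.children t).getD k t) s j

/-- The message `μ_{t→s;j}` sent by node `t` under partial assignment `y`. -/
def msg (S : SPGM Xvar Zvar Xdom Zdom) (y : (Xvar ⊕ Zvar) → Option ℕ)
    (t : S.V) (s : Option S.V) (j : ℕ) : ℝ :=
  msgAux S y (S.rank t + 1) t s j

/-- Evaluation of the SPGM at the partial assignment `y` (value of the root message). -/
def eval (S : SPGM Xvar Zvar Xdom Zdom) (y : (Xvar ⊕ Zvar) → Option ℕ) : ℝ :=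
  S.msg y S.root none 0

end SPGM

namespace SPGM

variable {Xvar Zvar : Type} {Xdom : Xvar → ℕ} {Zdom : Zvar → ℕ}

/-- Edge of the subtree determined by the choice function `σ`: a Vnode or product node keeps
all its child edges, a sum node `t` keeps only the edge to its `σ t`-th child. -/
def subEdge (S : SPGM Xvar Zvar Xdom Zdom) (σ : S.V → ℕ) (t c : S.V) : Prop :=
  (¬ S.isSum t ∧ c ∈ S.children t) ∨ (S.isSum t ∧ c = (S.children t).getD (σ t) t)

/-- `KeepAt S σ r v`: node `v` is kept in the subtree with root `r` determined by the
choice function `σ`. -/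
inductive KeepAt (S : SPGM Xvar Zvar Xdom Zdom) (σ : S.V → ℕ) : S.V → S.V → Prop where
  | refl (r : S.V) : KeepAt S σ r r
  | step {r t c : S.V} : KeepAt S σ r t → S.subEdge σ t c → KeepAt S σ r c

/-- Node `v` is kept in the subtree of `S` (rooted at the root of `S`) determined by `σ`. -/
def Keep (S : SPGM Xvar Zvar Xdom Zdom) (σ : S.V → ℕ) (v : S.V) : Prop :=
  KeepAt S σ S.root v

/-- The set of subtrees of the sub-SPGM rooted at `r`, represented by their canonical
choice functions: `σ t` is a valid child index at every sum node and is `0` at every node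
that is not a kept sum node.  Distinct canonical choice functions correspond exactly to
distinct subtrees. -/
def subtreesAt (S : SPGM Xvar Zvar Xdom Zdom) (r : S.V) : Set (S.V → ℕ) :=
  {σ | (∀ t : S.V, S.isSum t → σ t < (S.children t).length) ∧
       (∀ t : S.V, ¬ (KeepAt S σ r t ∧ S.isSum t) → σ t = 0)}

/-- The set `T(S)` of subtrees of `S`, represented by canonical choice functions. -/
def subtrees (S : SPGM Xvar Zvar Xdom Zdom) : Set (S.V → ℕ) :=
  S.subtreesAt S.root

/-- Message passing within the subtree determined by `σ` (with fuel, as in `msgAux`):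
at a sum node only the chosen child is used. -/
def msgSubAux (S : SPGM Xvar Zvar Xdom Zdom) (σ : S.V → ℕ)
    (y : (Xvar ⊕ Zvar) → Option ℕ) : ℕ → S.V → Option S.V → ℕ → ℝ
  | 0, _, _, _ => 1
  | n + 1, t, s, j =>
    match S.kind t with
    | SPGMKind.vnode x =>
        ∑ k ∈ Finset.range (Xdom x),
          (match s with
            | some s' => S.Pcond t s' k j
            | none => S.Punary t k) *
            Indicator y (Sum.inl x) k *
            (match S.children t with
              | [] => (1 : ℝ)
              | c :: _ => msgSubAux S σ y n c (some t) k)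
    | SPGMKind.prod => ((S.children t).map fun c => msgSubAux S σ y n c s j).prod
    | SPGMKind.sumObs z =>
        Indicator y (Sum.inr z) (σ t) * S.Q t (σ t) *
          msgSubAux S σ y n ((S.children t).getD (σ t) t) s j
    | SPGMKind.sumUnobs =>
        S.W t (σ t) * msgSubAux S σ y n ((S.children t).getD (σ t) t) s j

/-- The message `μ_{t→s;j}` computed within the subtree determined by `σ`. -/
def msgSub (S : SPGM Xvar Zvar Xdom Zdom) (σ : S.V → ℕ) (y : (Xvar ⊕ Zvar) → Option ℕ)
    (t : S.V) (s : Option S.V) (j : ℕ) : ℝ :=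
  msgSubAux S σ y (S.rank t + 1) t s j

/-- Evaluation of the subtree `τ` of `S` determined by `σ` at the partial assignment `y`. -/
def evalSub (S : SPGM Xvar Zvar Xdom Zdom) (σ : S.V → ℕ)
    (y : (Xvar ⊕ Zvar) → Option ℕ) : ℝ :=
  S.msgSub σ y S.root none 0

/-- An edge of `S` kept in the subtree determined by `σ`. -/
def keptEdge (S : SPGM Xvar Zvar Xdom Zdom) (σ : S.V → ℕ) (t c : S.V) : Prop :=
  S.Keep σ t ∧ S.subEdge σ t c

/-- The underlying undirected (simple) graph of the subtree determined by `σ`: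
vertices are the kept nodes, adjacency is the (undirected) kept-edge relation. -/
def subtreeGraph (S : SPGM Xvar Zvar Xdom Zdom) (σ : S.V → ℕ) : SimpleGraph S.V where
  Adj a b := a ≠ b ∧ S.Keep σ a ∧ S.Keep σ b ∧ (S.keptEdge σ a b ∨ S.keptEdge σ b a)
  symm := by
    constructor
    intro a b h
    exact ⟨Ne.symm h.1, h.2.2.1, h.2.1, h.2.2.2.symm⟩
  loopless := by
    constructor
    intro a h
    exact h.1 rfl

/-- The scope of the subtree determined by `σ`: all variables labeling kept nodes. -/
def subtreeScope (S : SPGM Xvar Zvar Xdom Zdom) (σ : S.V → ℕ) : Set (Xvar ⊕ Zvar) :=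
  {v | ∃ t : S.V, S.Keep σ t ∧ S.label t = some v}

/-- The coefficient `λ_τ` of the subtree determined by `σ`: the product of the weights of
all kept sum nodes. -/
def lam (S : SPGM Xvar Zvar Xdom Zdom) (σ : S.V → ℕ) : ℝ :=
  (∏ t : S.V, if S.Keep σ t ∧ S.isSumObs t then S.Q t (σ t) else 1) *
    (∏ t : S.V, if S.Keep σ t ∧ S.isSumUnobs t then S.W t (σ t) else 1)

/-- The product of the indicator variables in `z_τ` (one for each kept observed sum node),
evaluated relative to the partial assignment `y`. -/
def zInd (S : SPGM Xvar Zvar Xdom Zdom) (σ : S.V → ℕ)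
    (y : (Xvar ⊕ Zvar) → Option ℕ) : ℝ :=
  ∏ t : S.V,
    match S.kind t with
    | SPGMKind.sumObs z => if S.Keep σ t then Indicator y (Sum.inr z) (σ t) else 1
    | _ => 1

/-- Value of a total assignment `x` of the X-variables at a Vnode (`0` at other nodes). -/
def xval (S : SPGM Xvar Zvar Xdom Zdom) (x : Xvar → ℕ) (t : S.V) : ℕ :=
  match S.kind t with
  | SPGMKind.vnode xv => x xv
  | _ => 0

/-- A directed path along edges of the subtree determined by `σ` with no intermediate
Vnode. -/
inductive ReachNoVSub (S : SPGM Xvar Zvar Xdom Zdom) (σ : S.V → ℕ) : S.V → S.V → Prop where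
  | base {s c : S.V} : S.subEdge σ s c → ReachNoVSub S σ s c
  | step {s t c : S.V} : ReachNoVSub S σ s t → ¬ S.isVnode t → S.subEdge σ t c →
      ReachNoVSub S σ s c

/-- `s` is a Vparent of `t` within the subtree determined by `σ`. -/
def vparentSub (S : SPGM Xvar Zvar Xdom Zdom) (σ : S.V → ℕ) (s t : S.V) : Prop :=
  S.isVnode s ∧ ReachNoVSub S σ s t

/-- The tree graphical model distribution `P_τ` of the subtree determined by `σ`, as a
function of a total assignment `x` of the X-variables: the product of the unary tables of
the kept Vnodes without Vparent in the subtree and of the conditional tables of all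
Vparent-child Vnode pairs of the subtree. -/
def Ptau (S : SPGM Xvar Zvar Xdom Zdom) (σ : S.V → ℕ) (x : Xvar → ℕ) : ℝ :=
  (∏ t : S.V,
      if S.Keep σ t ∧ S.isVnode t ∧ ¬ (∃ s, S.Keep σ s ∧ S.vparentSub σ s t) then
        S.Punary t (S.xval x t)
      else 1) *
    ∏ p : S.V × S.V,
      if S.Keep σ p.1 ∧ S.Keep σ p.2 ∧ S.isVnode p.2 ∧ S.vparentSub σ p.1 p.2 then
        S.Pcond p.2 p.1 (S.xval x p.2) (S.xval x p.1)
      else 1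

/-- The number of edges of the DAG underlying `S`. -/
def edgeCount (S : SPGM Xvar Zvar Xdom Zdom) : ℕ :=
  ∑ v : S.V, (S.children v).length

end SPGM

namespace SPGMProof

open SPGM

variable {Xvar Zvar : Type} {Xdom : Xvar → ℕ} {Zdom : Zvar → ℕ}
variable {S : SPGM Xvar Zvar Xdom Zdom} {σ : S.V → ℕ}

lemma two_mem_of_length_le_one {α : Type*} {l : List α} (h : l.length ≤ 1)
    {a b : α} (ha : a ∈ l) (hb : b ∈ l) : a = b := by
  match l, h with
  | [], _ => cases ha
  | [x], _ =>
    rw [List.mem_singleton] at ha hb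
    rw [ha, hb]

lemma subEdge_mem (hσ : ∀ t : S.V, S.isSum t → σ t < (S.children t).length)
    {t c : S.V} (h : S.subEdge σ t c) : c ∈ S.children t := by
  rcases h with ⟨_, hm⟩ | ⟨hs, hc⟩
  · exact hm
  · have hlt := hσ t hs
    rw [hc, List.getD_eq_getElem _ _ hlt]
    exact List.getElem_mem hlt

lemma subEdge_rank (hσ : ∀ t : S.V, S.isSum t → σ t < (S.children t).length)
    {t c : S.V} (h : S.subEdge σ t c) : S.rank c < S.rank t :=
  S.rank_lt t c (subEdge_mem hσ h)

lemma keepAt_rank (hσ : ∀ t : S.V, S.isSum t → σ t < (S.children t).length)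
    {a b : S.V} (h : S.KeepAt σ a b) : S.rank b ≤ S.rank a := by
  induction h with
  | refl => exact le_rfl
  | step _ e ih => exact le_trans (le_of_lt (subEdge_rank hσ e)) ih

lemma keepAt_head {a b : S.V} (h : S.KeepAt σ a b) :
    a = b ∨ ∃ d, S.subEdge σ a d ∧ S.KeepAt σ d b := by
  induction h with
  | refl => exact Or.inl rfl
  | step _ e ih =>
    rcases ih with rfl | ⟨d, ed, kd⟩
    · exact Or.inr ⟨_, e, KeepAt.refl _⟩
    · exact Or.inr ⟨d, ed, KeepAt.step kd e⟩

lemma keepAt_reach (hσ : ∀ t : S.V, S.isSum t → σ t < (S.children t).length)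
    {a b : S.V} (h : S.KeepAt σ a b) : S.Reach a b := by
  induction h with
  | refl => exact Relation.ReflTransGen.refl
  | step _ e ih => exact Relation.ReflTransGen.tail ih (subEdge_mem hσ e)

lemma scope_mono {a b : S.V} (h : S.Reach a b) : S.scope b ⊆ S.scope a := by
  rintro v ⟨u, hu, hl⟩
  exact ⟨u, h.trans hu, hl⟩

lemma scope_nonempty (hS : S.Valid) : ∀ t : S.V, (S.scope t).Nonempty := by
  suffices H : ∀ (n : ℕ) (t : S.V), S.rank t = n → (S.scope t).Nonempty by
    exact fun t => H (S.rank t) t rfl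
  intro n
  induction n using Nat.strong_induction_on with
  | _ n IH =>
    intro t ht
    have hchild : ∀ c ∈ S.children t, (S.scope c).Nonempty := by
      intro c hc
      have := IH (S.rank c) (ht ▸ S.rank_lt t c hc) c rfl
      exact this
    have hsub : ∀ c ∈ S.children t, (S.scope t).Nonempty := by
      intro c hc
      exact Set.Nonempty.mono (scope_mono (Relation.ReflTransGen.single hc)) (hchild c hc)
    have hne : S.children t ≠ [] → (S.scope t).Nonempty := by
      intro h
      cases hl : S.children t with
      | nil => exact absurd hl h
      | cons c l => exact hsub c (hl ▸ (List.mem_cons_self : c ∈ c :: l))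
    match hk : S.kind t with
    | SPGMKind.vnode x =>
        exact ⟨Sum.inl x, t, Relation.ReflTransGen.refl, by simp [SPGM.label, hk]⟩
    | SPGMKind.sumObs z =>
        exact ⟨Sum.inr z, t, Relation.ReflTransGen.refl, by simp [SPGM.label, hk]⟩
    | SPGMKind.prod => exact hne (hS.prod_child t hk)
    | SPGMKind.sumUnobs => exact hne (hS.sum_child t (Or.inr hk))

lemma disjoint_of_two (hS : S.Valid)
    (hσ : ∀ t : S.V, S.isSum t → σ t < (S.children t).length)
    {t c d : S.V} (hc : S.subEdge σ t c) (hd : S.subEdge σ t d) (hne : c ≠ d) :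
    Disjoint (S.scope c) (S.scope d) := by
  by_cases hsum : S.isSum t
  · exfalso
    rcases hc with ⟨hn, _⟩ | ⟨_, hc⟩
    · exact hn hsum
    rcases hd with ⟨hn, _⟩ | ⟨_, hd⟩
    · exact hn hsum
    · exact hne (hc.trans hd.symm)
  · have hcm := subEdge_mem hσ hc
    have hdm := subEdge_mem hσ hd
    match hk : S.kind t with
    | SPGMKind.vnode x =>
        exact absurd (two_mem_of_length_le_one (hS.vnode_child t ⟨x, hk⟩) hcm hdm) hne
    | SPGMKind.prod =>
        exact (haveI : Std.Symm (fun c c' : S.V => Disjoint (S.scope c) (S.scope c')) := ⟨fun _ _ h => h.symm⟩; (hS.prod_scope t hk).forall hcm hdm hne)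
    | SPGMKind.sumObs z => exact absurd (Or.inl ⟨z, hk⟩) hsum
    | SPGMKind.sumUnobs => exact absurd (Or.inr hk) hsum

lemma noMergeAux (hS : S.Valid)
    (hσ : ∀ t : S.V, S.isSum t → σ t < (S.children t).length)
    {t t' c : S.V} (ht' : S.KeepAt σ t t') (hne : t ≠ t')
    (hc : S.subEdge σ t c) (hc' : S.subEdge σ t' c) : False := by
  rcases keepAt_head ht' with rfl | ⟨d, ed, kd⟩
  · exact hne rfl
  by_cases hdc : d = c
  · subst hdc
    have h1 : S.rank t' ≤ S.rank d := keepAt_rank hσ kd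
    have h2 : S.rank d < S.rank t' := subEdge_rank hσ hc'
    omega
  · have hdisj := disjoint_of_two hS hσ hc ed (fun h => hdc h.symm)
    have hreach : S.Reach d c :=
      Relation.ReflTransGen.tail (keepAt_reach hσ kd) (subEdge_mem hσ hc')
    obtain ⟨v, hv⟩ := scope_nonempty hS c
    exact Set.disjoint_left.mp hdisj hv (scope_mono hreach hv)

lemma noMerge (hS : S.Valid)
    (hσ : ∀ t : S.V, S.isSum t → σ t < (S.children t).length) :
    ∀ v t t' c : S.V, S.KeepAt σ v t → S.KeepAt σ v t' →
      S.subEdge σ t c → S.subEdge σ t' c → t = t' := by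
  suffices H : ∀ (n : ℕ) (v t t' c : S.V), S.rank v = n → S.KeepAt σ v t →
      S.KeepAt σ v t' → S.subEdge σ t c → S.subEdge σ t' c → t = t' by
    exact fun v t t' c h1 h2 h3 h4 => H (S.rank v) v t t' c rfl h1 h2 h3 h4
  intro n
  induction n using Nat.strong_induction_on with
  | _ n IH =>
  intro v t t' c hrank h1 h2 h3 h4
  by_contra hne
  rcases keepAt_head h1 with rfl | ⟨d1, e1, k1⟩
  · exact noMergeAux hS hσ h2 hne h3 h4
  rcases keepAt_head h2 with rfl | ⟨d2, e2, k2⟩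
  · exact noMergeAux hS hσ h1 (Ne.symm hne) h4 h3
  by_cases hd : d1 = d2
  · subst hd
    exact hne (IH (S.rank d1) (hrank ▸ subEdge_rank hσ e1) d1 t t' c rfl k1 k2 h3 h4)
  · have hdisj := disjoint_of_two hS hσ e1 e2 hd
    have r1 : S.Reach d1 c :=
      Relation.ReflTransGen.tail (keepAt_reach hσ k1) (subEdge_mem hσ h3)
    have r2 : S.Reach d2 c :=
      Relation.ReflTransGen.tail (keepAt_reach hσ k2) (subEdge_mem hσ h4)
    obtain ⟨x, hx⟩ := scope_nonempty hS c
    exact Set.disjoint_left.mp hdisj (scope_mono r1 hx) (scope_mono r2 hx)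

/-- Every non-nil walk contains an edge into its endpoint. -/
lemma exists_last_edge {V : Type*} {G : SimpleGraph V} :
    ∀ {a b : V} (w : G.Walk a b), ¬ w.Nil → ∃ y, G.Adj y b ∧ s(y, b) ∈ w.edges := by
  intro a b w
  induction w with
  | nil => intro h; exact absurd SimpleGraph.Walk.nil_nil h
  | @cons u v b h' p ih =>
    intro _
    cases p with
    | nil => exact ⟨_, h', by simp⟩
    | cons h'' p' =>
      obtain ⟨y, hy, hm⟩ := ih SimpleGraph.Walk.not_nil_cons
      exact ⟨y, hy, List.mem_cons_of_mem _ hm⟩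

/-- A graph in which every edge strictly changes a rank and every vertex has at most one
higher-rank neighbor is acyclic. -/
lemma acyclic_of_ranked {V : Type*} [DecidableEq V] (G : SimpleGraph V) (rk : V → ℕ)
    (hadj : ∀ {a b : V}, G.Adj a b → rk a ≠ rk b)
    (hpar : ∀ {a b c : V}, G.Adj a c → G.Adj b c → rk c < rk a → rk c < rk b → a = b) :
    G.IsAcyclic := by
  intro v p hp
  obtain ⟨u, hu, hmin⟩ := Finset.exists_min_image p.support.toFinset rk
    ⟨v, List.mem_toFinset.mpr p.start_mem_support⟩
  rw [List.mem_toFinset] at hu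
  have hmin' : ∀ w ∈ p.support, rk u ≤ rk w := fun w hw =>
    hmin w (List.mem_toFinset.mpr hw)
  have hq := hp.rotate hu
  have hrot := SimpleGraph.Walk.support_rotate p u hu
  set q := p.rotate u hu with hqdef
  have hsub : ∀ w ∈ q.support, w ∈ p.support := by
    intro w hw
    rw [q.support_eq_cons] at hw
    rcases List.mem_cons.mp hw with rfl | hw
    · exact hu
    · exact List.mem_of_mem_tail (hrot.mem_iff.mp hw)
  clear_value q
  clear hqdef hrot
  cases q with
  | nil => exact hq.ne_nil rfl
  | @cons _ x _ hadj₁ q₁ =>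
    obtain ⟨hq₁path, hxe⟩ := (SimpleGraph.Walk.cons_isCycle_iff q₁ hadj₁).mp hq
    have hxu : x ≠ u := (G.ne_of_adj hadj₁).symm
    obtain ⟨y, hy, hye⟩ :=
      exists_last_edge q₁ (SimpleGraph.Walk.not_nil_of_ne hxu)
    have hxy : x ≠ y := by
      rintro rfl
      exact hxe (by rwa [Sym2.eq_swap] at hye)
    have hxs : x ∈ p.support := hsub x (by simp [q₁.start_mem_support])
    have hys : y ∈ p.support := by
      refine hsub y ?_
      simp only [SimpleGraph.Walk.support_cons, List.mem_cons]
      exact Or.inr (q₁.fst_mem_support_of_mem_edges hye)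
    have hux : rk u < rk x := lt_of_le_of_ne (hmin' x hxs) (hadj hadj₁)
    have huy : rk u < rk y := lt_of_le_of_ne (hmin' y hys) (fun h => hadj hy h.symm)
    exact hxy (hpar (G.adj_symm hadj₁) hy hux huy)

end SPGMProof

open SPGMProof

/-- For every SPGM `S` and every subtree `τ ∈ T(S)` (given by its
canonical choice function `σ`), the underlying directed graph of `τ` is a rooted tree:
every kept node is connected to the root by kept edges, the underlying undirected graph
of the subtree is acyclic, and every kept node other than the root has exactly one
parent within `τ`. -/
theorem spgm_subtree_is_rooted_tree {Xvar Zvar : Type} {Xdom : Xvar → ℕ} {Zdom : Zvar → ℕ}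
    (S : SPGM Xvar Zvar Xdom Zdom) (hS : S.Valid) (hN : S.Normalized)
    (σ : S.V → ℕ) (hσ : σ ∈ S.subtrees) :
    (∀ v : S.V, S.Keep σ v → Relation.ReflTransGen (S.keptEdge σ) S.root v) ∧
      (S.subtreeGraph σ).IsAcyclic ∧
      (∀ c : S.V, S.Keep σ c → c ≠ S.root → ∃! t : S.V, S.keptEdge σ t c) := by
  obtain ⟨hσ1, -⟩ := hσ
  -- direction of edges
  have hdir : ∀ {a b : S.V}, (S.subtreeGraph σ).Adj a b → S.rank b < S.rank a →
      S.keptEdge σ a b := by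
    rintro a b ⟨-, -, -, h | h⟩ hr
    · exact h
    · exact absurd (subEdge_rank hσ1 h.2) (by omega)
  have part1 : ∀ v : S.V, S.Keep σ v → Relation.ReflTransGen (S.keptEdge σ) S.root v := by
    intro v hv
    induction hv with
    | refl => exact Relation.ReflTransGen.refl
    | step ht e ih => exact Relation.ReflTransGen.tail ih ⟨ht, e⟩
  refine ⟨part1, ?_, ?_⟩
  · refine acyclic_of_ranked _ S.rank ?_ ?_
    · rintro a b ⟨-, -, -, h | h⟩
      · exact Nat.ne_of_gt (subEdge_rank hσ1 h.2)
      · exact Nat.ne_of_lt (subEdge_rank hσ1 h.2)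
    · intro a b c hac hbc hra hrb
      have h1 := hdir hac hra
      have h2 := hdir hbc hrb
      exact noMerge hS hσ1 S.root a b c h1.1 h2.1 h1.2 h2.2
  · intro c hc hne
    obtain ⟨t, ht⟩ : ∃ t : S.V, S.keptEdge σ t c := by
      have hc' : S.KeepAt σ S.root c := hc
      cases hc' with
      | refl => exact absurd rfl hne
      | step ht e => exact ⟨_, ht, e⟩
    exact ⟨t, ht, fun t' ht' => noMerge hS hσ1 S.root t' t c ht'.1 ht.1 ht'.2 ht.2⟩
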